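/- Let (R_n)_{n≥0} be random variables on a probability space with 1 ≤ R_n ≤ 2^n almost surely for every n. Suppose there are constants M < ∞ and α ∈ ℝ such that E[R_n]·E[1/R_n] ≤ M for all n ≥ 1 and (1/n)·log E[R_n] → α as n → ∞. Then (1/n)·log R_n → α almost surely, and (1/n)·E[log R_n] → α. -/

import Mathlib

open MeasureTheory Filter

/-- Markov's inequality in `ℝ≥0∞` form. -/
lemma markov_aux {Ω : Type} [MeasurableSpace Ω] (P : Measure Ω) [IsProbabilityMeasure P]
    {f : Ω → ℝ} (hf : 0 ≤ᵐ[P] f) (hfi : Integrable f P) {t : ℝ} (ht : 0 < t) :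
    P {ω | t ≤ f ω} ≤ ENNReal.ofReal ((∫ ω, f ω ∂P) / t) := by
  have h := mul_meas_ge_le_integral_of_nonneg hf hfi t
  have hne : P {ω | t ≤ f ω} ≠ ⊤ := measure_ne_top _ _
  rw [ENNReal.le_ofReal_iff_toReal_le hne]
  · rw [le_div_iff₀ ht]
    change t * (P {ω | t ≤ f ω}).toReal ≤ _ at h
    linarith [h]
  · exact div_nonneg (integral_nonneg_of_ae hf) ht.le

theorem stmt6 {Ω : Type} [MeasurableSpace Ω] (P : Measure Ω) [IsProbabilityMeasure P]
    (R : ℕ → Ω → ℝ) (hmeas : ∀ n, Measurable (R n))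
    (hbound : ∀ n, ∀ᵐ ω ∂P, 1 ≤ R n ω ∧ R n ω ≤ 2 ^ n)
    (M α : ℝ)
    (hM : ∀ n : ℕ, 1 ≤ n → (∫ ω, R n ω ∂P) * (∫ ω, (R n ω)⁻¹ ∂P) ≤ M)
    (hα : Tendsto (fun n : ℕ => (1 / (n : ℝ)) * Real.log (∫ ω, R n ω ∂P)) atTop (nhds α)) :
    (∀ᵐ ω ∂P, Tendsto (fun n : ℕ => (1 / (n : ℝ)) * Real.log (R n ω)) atTop (nhds α)) ∧
    Tendsto (fun n : ℕ => (1 / (n : ℝ)) * ∫ ω, Real.log (R n ω) ∂P) atTop (nhds α) := by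
  set a : ℕ → ℝ := fun n => ∫ ω, R n ω ∂P with ha_def
  set b : ℕ → ℝ := fun n => ∫ ω, (R n ω)⁻¹ ∂P with hb_def
  -- integrability
  have hint : ∀ n, Integrable (R n) P := by
    intro n
    refine Integrable.mono' (integrable_const ((2:ℝ)^n)) (hmeas n).aestronglyMeasurable ?_
    filter_upwards [hbound n] with ω h
    rw [Real.norm_eq_abs, abs_of_nonneg (by linarith [h.1])]
    exact h.2
  have hinv_int : ∀ n, Integrable (fun ω => (R n ω)⁻¹) P := by
    intro n
    refine Integrable.mono' (integrable_const (1:ℝ)) (hmeas n).inv.aestronglyMeasurable ?_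
    filter_upwards [hbound n] with ω h
    rw [Real.norm_eq_abs, abs_of_nonneg (inv_nonneg.mpr (by linarith [h.1]))]
    exact inv_le_one_of_one_le₀ h.1
  have ha1 : ∀ n, 1 ≤ a n := by
    intro n
    have := integral_mono_ae (integrable_const (1:ℝ)) (hint n)
      ((hbound n).mono fun ω h => h.1)
    simpa using this
  have hapos : ∀ n, 0 < a n := fun n => lt_of_lt_of_le one_pos (ha1 n)
  have hbpos : ∀ n, 0 < b n := by
    intro n
    have hle : ((2:ℝ)^n)⁻¹ ≤ b n := by
      have := integral_mono_ae (integrable_const (((2:ℝ)^n)⁻¹)) (hinv_int n)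
        ((hbound n).mono fun ω h => by
          have h1 : (0:ℝ) < R n ω := by linarith [h.1]
          exact inv_anti₀ h1 h.2)
      simpa using this
    have : (0:ℝ) < ((2:ℝ)^n)⁻¹ := by positivity
    linarith
  have hMpos : 0 < M := lt_of_lt_of_le (mul_pos (hapos 1) (hbpos 1)) (hM 1 le_rfl)
  have hlogb : ∀ n, 1 ≤ n → Real.log (b n) ≤ Real.log M - Real.log (a n) := by
    intro n hn
    have hbM : b n ≤ M / a n := by
      rw [le_div_iff₀ (hapos n)]
      calc b n * a n = a n * b n := by ring
        _ ≤ M := hM n hn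
    calc Real.log (b n) ≤ Real.log (M / a n) := Real.log_le_log (hbpos n) hbM
      _ = Real.log M - Real.log (a n) := Real.log_div hMpos.ne' (hapos n).ne'
  -- integrability of log R n
  have hlog_int : ∀ n, Integrable (fun ω => Real.log (R n ω)) P := by
    intro n
    refine Integrable.mono' (integrable_const (Real.log ((2:ℝ)^n)))
      (Real.measurable_log.comp (hmeas n)).aestronglyMeasurable ?_
    filter_upwards [hbound n] with ω h
    rw [Real.norm_eq_abs, abs_of_nonneg (Real.log_nonneg h.1)]
    exact Real.log_le_log (by linarith [h.1]) h.2
  -- Jensen-type bounds via the tangent-line inequality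
  have hupper : ∀ n, (∫ ω, Real.log (R n ω) ∂P) ≤ Real.log (a n) := by
    intro n
    have h2 : Integrable (fun ω => Real.log (a n) + R n ω / a n) P :=
      (integrable_const _).add ((hint n).div_const _)
    have key : ∀ᵐ ω ∂P, Real.log (R n ω) ≤ Real.log (a n) + R n ω / a n - 1 := by
      filter_upwards [hbound n] with ω h
      have hR : (0:ℝ) < R n ω := by linarith [h.1]
      have := Real.log_le_sub_one_of_pos (div_pos hR (hapos n))
      rw [Real.log_div hR.ne' (hapos n).ne'] at this
      linarith
    have h3 : Integrable (fun ω => Real.log (a n) + R n ω / a n - 1) P :=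
      h2.sub (integrable_const 1)
    have hmono := integral_mono_ae (hlog_int n) h3 key
    have hcalc : ∫ ω, (Real.log (a n) + R n ω / a n - 1) ∂P = Real.log (a n) := by
      rw [integral_sub h2 (integrable_const 1),
        integral_add (integrable_const _) ((hint n).div_const _), integral_div,
        integral_const, integral_const]
      simp only [measure_univ, probReal_univ, ENNReal.toReal_one, one_smul, smul_eq_mul, one_mul]
      rw [div_self (hapos n).ne']
      ring
    linarith [hmono, hcalc.le, hcalc.ge]
  have hlower : ∀ n, -Real.log (b n) ≤ ∫ ω, Real.log (R n ω) ∂P := by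
    intro n
    have h2 : Integrable (fun ω => Real.log (b n) + (R n ω)⁻¹ / b n) P :=
      (integrable_const _).add ((hinv_int n).div_const _)
    have key : ∀ᵐ ω ∂P, -Real.log (R n ω) ≤ Real.log (b n) + (R n ω)⁻¹ / b n - 1 := by
      filter_upwards [hbound n] with ω h
      have hR : (0:ℝ) < R n ω := by linarith [h.1]
      have hRi : (0:ℝ) < (R n ω)⁻¹ := inv_pos.mpr hR
      have := Real.log_le_sub_one_of_pos (div_pos hRi (hbpos n))
      rw [Real.log_div hRi.ne' (hbpos n).ne', Real.log_inv] at this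
      linarith
    have hneg : Integrable (fun ω => -Real.log (R n ω)) P := (hlog_int n).neg
    have h3 : Integrable (fun ω => Real.log (b n) + (R n ω)⁻¹ / b n - 1) P :=
      h2.sub (integrable_const 1)
    have hmono := integral_mono_ae hneg h3 key
    have hneg_eq : ∫ ω, -Real.log (R n ω) ∂P = -∫ ω, Real.log (R n ω) ∂P :=
      integral_neg _
    have hcalc : ∫ ω, (Real.log (b n) + (R n ω)⁻¹ / b n - 1) ∂P = Real.log (b n) := by
      rw [integral_sub h2 (integrable_const 1),
        integral_add (integrable_const _) ((hinv_int n).div_const _), integral_div,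
        integral_const, integral_const]
      simp only [measure_univ, probReal_univ, ENNReal.toReal_one, one_smul, smul_eq_mul, one_mul]
      rw [div_self (hbpos n).ne']
      ring
    rw [hneg_eq] at hmono
    linarith [hmono, hcalc.le, hcalc.ge]
  have hlogM_tendsto : Tendsto (fun n : ℕ => (1 / (n:ℝ)) * Real.log M) atTop (nhds 0) := by
    simpa using tendsto_one_div_atTop_nhds_zero_nat.mul_const (Real.log M)
  -- Part 2
  have part2 : Tendsto (fun n : ℕ => (1 / (n : ℝ)) * ∫ ω, Real.log (R n ω) ∂P) atTop (nhds α) := by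
    have hlow : Tendsto (fun n : ℕ => (1 / (n:ℝ)) * Real.log (a n) - (1 / (n:ℝ)) * Real.log M)
        atTop (nhds α) := by
      simpa using hα.sub hlogM_tendsto
    refine tendsto_of_tendsto_of_tendsto_of_le_of_le' hlow hα ?_ ?_
    · filter_upwards [eventually_ge_atTop 1] with n hn
      have h1 : Real.log (a n) - Real.log M ≤ ∫ ω, Real.log (R n ω) ∂P := by
        have h2 := hlower n
        have h3 := hlogb n hn
        linarith
      have hnn : (0:ℝ) ≤ 1 / (n:ℝ) := by positivity
      calc (1 / (n:ℝ)) * Real.log (a n) - (1 / (n:ℝ)) * Real.log M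
          = (1 / (n:ℝ)) * (Real.log (a n) - Real.log M) := by ring
        _ ≤ (1 / (n:ℝ)) * ∫ ω, Real.log (R n ω) ∂P := mul_le_mul_of_nonneg_left h1 hnn
    · filter_upwards [eventually_ge_atTop 1] with n hn
      exact mul_le_mul_of_nonneg_left (hupper n) (by positivity)
  -- Part 1 : Borel–Cantelli argument
  have aeps : ∀ ε : ℝ, 0 < ε → ∀ᵐ ω ∂P, ∀ᶠ n in atTop,
      R n ω < Real.exp (ε * n) * a n ∧ (R n ω)⁻¹ < Real.exp (ε * n) * b n := by
    intro ε hε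
    set p : ℕ → Ω → Prop := fun n ω =>
      Real.exp (ε * n) * a n ≤ R n ω ∨ Real.exp (ε * n) * b n ≤ (R n ω)⁻¹ with hp_def
    have hmeasbound : ∀ n, P {ω | p n ω} ≤
        ENNReal.ofReal (Real.exp (-ε)) ^ n + ENNReal.ofReal (Real.exp (-ε)) ^ n := by
      intro n
      have hexp_eq : ∀ c : ℝ, 0 < c → c / (Real.exp (ε * n) * c) = Real.exp (-ε) ^ n := by
        intro c hc
        rw [← Real.exp_nat_mul, show (n:ℝ) * -ε = -(ε * n) by ring, Real.exp_neg]
        rw [mul_comm, ← div_div, div_self hc.ne', one_div]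
      have hsub : {ω | p n ω} ⊆ {ω | Real.exp (ε * n) * a n ≤ R n ω} ∪
          {ω | Real.exp (ε * n) * b n ≤ (R n ω)⁻¹} := fun ω h => h
      have hA : P {ω | Real.exp (ε * n) * a n ≤ R n ω} ≤
          ENNReal.ofReal (Real.exp (-ε)) ^ n := by
        have hnonneg : 0 ≤ᵐ[P] R n :=
          (hbound n).mono fun ω h => show (0:ℝ) ≤ R n ω by linarith [h.1]
        have h := markov_aux P hnonneg (hint n)
          (t := Real.exp (ε * n) * a n) (mul_pos (Real.exp_pos _) (hapos n))
        refine h.trans ?_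
        rw [← ENNReal.ofReal_pow (Real.exp_nonneg _)]
        exact ENNReal.ofReal_le_ofReal (le_of_eq (hexp_eq (a n) (hapos n)))
      have hB : P {ω | Real.exp (ε * n) * b n ≤ (R n ω)⁻¹} ≤
          ENNReal.ofReal (Real.exp (-ε)) ^ n := by
        have hnonneg : 0 ≤ᵐ[P] (fun ω => (R n ω)⁻¹) :=
          (hbound n).mono fun ω h => show (0:ℝ) ≤ (R n ω)⁻¹ from
            inv_nonneg.mpr (by linarith [h.1])
        have h := markov_aux P hnonneg (hinv_int n)
          (t := Real.exp (ε * n) * b n) (mul_pos (Real.exp_pos _) (hbpos n))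
        refine h.trans ?_
        rw [← ENNReal.ofReal_pow (Real.exp_nonneg _)]
        exact ENNReal.ofReal_le_ofReal (le_of_eq (hexp_eq (b n) (hbpos n)))
      calc P {ω | p n ω} ≤ P ({ω | Real.exp (ε * n) * a n ≤ R n ω} ∪
            {ω | Real.exp (ε * n) * b n ≤ (R n ω)⁻¹}) := measure_mono hsub
        _ ≤ P {ω | Real.exp (ε * n) * a n ≤ R n ω} +
            P {ω | Real.exp (ε * n) * b n ≤ (R n ω)⁻¹} := measure_union_le _ _
        _ ≤ _ := add_le_add hA hB
    have hsum : (∑' n, P {ω | p n ω}) ≠ ⊤ := by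
      set r : ENNReal := ENNReal.ofReal (Real.exp (-ε)) with hr_def
      have hr1 : r < 1 := ENNReal.ofReal_lt_one.mpr (Real.exp_lt_one_iff.mpr (by linarith))
      have hle : (∑' n, P {ω | p n ω}) ≤ ∑' n : ℕ, (r ^ n + r ^ n) :=
        ENNReal.tsum_le_tsum hmeasbound
      have heq : (∑' n : ℕ, (r ^ n + r ^ n)) = (1 - r)⁻¹ + (1 - r)⁻¹ := by
        rw [ENNReal.tsum_add, ENNReal.tsum_geometric]
      have hfin : (1 - r)⁻¹ + (1 - r)⁻¹ ≠ ⊤ := by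
        have h1 : (1 - r)⁻¹ ≠ ⊤ := by
          rw [Ne, ENNReal.inv_eq_top, tsub_eq_zero_iff_le]
          exact fun h => absurd (lt_of_le_of_lt h hr1) (lt_irrefl _)
        exact ENNReal.add_ne_top.mpr ⟨h1, h1⟩
      exact ne_top_of_le_ne_top (heq ▸ hfin) hle
    have hzero := measure_setOf_frequently_eq_zero (μ := P) (p := p) hsum
    have hae : ∀ᵐ ω ∂P, ¬ ∃ᶠ n in atTop, p n ω := by
      rw [ae_iff]
      simp only [not_not]
      exact hzero
    filter_upwards [hae] with ω hω
    rw [not_frequently] at hω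
    filter_upwards [hω] with n hn
    simp only [hp_def] at hn
    push_neg at hn
    exact hn
  -- combine over ε = 1/(k+1)
  have hbdall : ∀ᵐ ω ∂P, ∀ n, 1 ≤ R n ω ∧ R n ω ≤ 2 ^ n := (ae_all_iff).mpr hbound
  have hcomb : ∀ᵐ ω ∂P, ∀ k : ℕ, ∀ᶠ n in atTop,
      R n ω < Real.exp ((1/((k:ℝ)+1)) * n) * a n ∧
      (R n ω)⁻¹ < Real.exp ((1/((k:ℝ)+1)) * n) * b n :=
    (ae_all_iff).mpr fun k => aeps (1/((k:ℝ)+1)) (by positivity)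
  have part1 : ∀ᵐ ω ∂P, Tendsto (fun n : ℕ => (1 / (n : ℝ)) * Real.log (R n ω))
      atTop (nhds α) := by
    filter_upwards [hbdall, hcomb] with ω hbd hk
    have hd : Tendsto (fun n : ℕ =>
        (1 / (n:ℝ)) * Real.log (R n ω) - (1 / (n:ℝ)) * Real.log (a n)) atTop (nhds 0) := by
      rw [Metric.tendsto_atTop]
      intro δ hδ
      obtain ⟨k, hkδ⟩ := exists_nat_one_div_lt (show (0:ℝ) < δ/2 by linarith)
      have hev2 : ∀ᶠ n : ℕ in atTop, (1 / (n:ℝ)) * Real.log M < δ/2 :=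
        hlogM_tendsto.eventually (gt_mem_nhds (show (0:ℝ) < δ/2 by linarith))
      have hall := (hk k).and (hev2.and (eventually_ge_atTop 1))
      rw [eventually_atTop] at hall
      obtain ⟨N, hN⟩ := hall
      refine ⟨N, fun n hn => ?_⟩
      obtain ⟨⟨hup, hlo⟩, hM2, hn1⟩ := hN n hn
      have hnpos : (0:ℝ) < n := by exact_mod_cast hn1
      have hRpos : (0:ℝ) < R n ω := by linarith [(hbd n).1]
      set e : ℝ := 1/((k:ℝ)+1) with he_def
      have hepos : 0 < e := by positivity
      -- upper bound on log R
      have hlogup : Real.log (R n ω) ≤ e * n + Real.log (a n) := by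
        have := Real.log_le_log hRpos hup.le
        rwa [Real.log_mul (Real.exp_ne_zero _) (hapos n).ne', Real.log_exp] at this
      -- lower bound on log R
      have hloglo : Real.log (a n) - Real.log M - e * n ≤ Real.log (R n ω) := by
        have h1 := Real.log_le_log (inv_pos.mpr hRpos) hlo.le
        rw [Real.log_mul (Real.exp_ne_zero _) (hbpos n).ne', Real.log_exp,
          Real.log_inv] at h1
        have h2 := hlogb n hn1
        linarith
      rw [Real.dist_eq, sub_zero, abs_sub_lt_iff]
      have hinv_nn : (0:ℝ) ≤ 1 / (n:ℝ) := by positivity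
      have hmul : (1 / (n:ℝ)) * ((n:ℝ)) = 1 := by
        field_simp
      constructor
      · have := mul_le_mul_of_nonneg_left hlogup hinv_nn
        have hexp : (1 / (n:ℝ)) * (e * n + Real.log (a n)) =
            e + (1 / (n:ℝ)) * Real.log (a n) := by
          field_simp
        rw [hexp] at this
        linarith
      · have := mul_le_mul_of_nonneg_left hloglo hinv_nn
        have hexp : (1 / (n:ℝ)) * (Real.log (a n) - Real.log M - e * n) =
            (1 / (n:ℝ)) * Real.log (a n) - (1 / (n:ℝ)) * Real.log M - e := by
          field_simp
        rw [hexp] at this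
        linarith
    have hsum := hd.add hα
    simp only [zero_add] at hsum
    have heq : (fun n : ℕ => ((1 / (n:ℝ)) * Real.log (R n ω) -
        (1 / (n:ℝ)) * Real.log (a n)) + (1 / (n:ℝ)) * Real.log (a n)) =
        fun n : ℕ => (1 / (n:ℝ)) * Real.log (R n ω) := by
      funext n
      ring
    rw [heq] at hsum
    exact hsum
  exact ⟨part1, part2⟩
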